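/- Let X be a Z^d shift space over a finite alphabet A and g a natural number such that for every pair of sites p, q in Z^d with dist(p,q) ≥ g, every finite set S ⊆ Z^d, and all configurations u ∈ A^{p}, v ∈ A^{q}, s ∈ A^S with [us]_X ≠ ∅ and [sv]_X ≠ ∅, one has [usv]_X ≠ ∅. Then X satisfies topological strong spatial mixing (TSSM) with gap g, i.e., the same conclusion holds for arbitrary finite sets U, V in place of the singletons {p}, {q}. -/

import Mathlib

abbrev Site (d : ℕ) := Fin d → ℤ

def dist1 {d : ℕ} (p q : Site d) : ℕ := ∑ i, (p i - q i).natAbs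

def IsShiftSpace {d : ℕ} {A : Type*} [TopologicalSpace A] (X : Set (Site d → A)) : Prop :=
  IsClosed X ∧ ∀ t : Site d, (fun (x : Site d → A) (q : Site d) => x (q + t)) '' X = X

/-- Topological strong spatial mixing with gap `g`. -/
def TSSM {d : ℕ} {A : Type*} (X : Set (Site d → A)) (g : ℕ) : Prop :=
  ∀ U S V : Set (Site d), U.Finite → S.Finite → V.Finite →
    Disjoint U S → Disjoint S V → Disjoint U V →
    (∀ p ∈ U, ∀ q ∈ V, g ≤ dist1 p q) →
    ∀ u s v : Site d → A,
      (∃ x ∈ X, (∀ p ∈ U, x p = u p) ∧ (∀ p ∈ S, x p = s p)) →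
      (∃ x ∈ X, (∀ p ∈ S, x p = s p) ∧ (∀ p ∈ V, x p = v p)) →
      ∃ x ∈ X, (∀ p ∈ U, x p = u p) ∧ (∀ p ∈ S, x p = s p) ∧ ∀ p ∈ V, x p = v p

lemma tssm_aux_single {d : ℕ} {A : Type*} (X : Set (Site d → A)) (g : ℕ)
    (h : ∀ p q : Site d, g ≤ dist1 p q →
      ∀ S : Set (Site d), S.Finite → p ∉ S → q ∉ S → p ≠ q →
      ∀ (u v : A) (s : Site d → A),
        (∃ x ∈ X, x p = u ∧ ∀ r ∈ S, x r = s r) →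
        (∃ x ∈ X, (∀ r ∈ S, x r = s r) ∧ x q = v) →
        ∃ x ∈ X, x p = u ∧ (∀ r ∈ S, x r = s r) ∧ x q = v) :
    ∀ V : Set (Site d), V.Finite →
      ∀ (p : Site d) (S : Set (Site d)), S.Finite → p ∉ S → p ∉ V → Disjoint S V →
      (∀ q ∈ V, g ≤ dist1 p q) →
      ∀ (u : A) (s v : Site d → A),
        (∃ x ∈ X, x p = u ∧ ∀ r ∈ S, x r = s r) →
        (∃ x ∈ X, (∀ r ∈ S, x r = s r) ∧ ∀ q ∈ V, x q = v q) →
        ∃ x ∈ X, x p = u ∧ (∀ r ∈ S, x r = s r) ∧ ∀ q ∈ V, x q = v q := by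
  classical
  intro V hV
  refine Set.Finite.induction_on
    (motive := fun V _ => ∀ (p : Site d) (S : Set (Site d)), S.Finite → p ∉ S → p ∉ V → Disjoint S V →
      (∀ q ∈ V, g ≤ dist1 p q) →
      ∀ (u : A) (s v : Site d → A),
        (∃ x ∈ X, x p = u ∧ ∀ r ∈ S, x r = s r) →
        (∃ x ∈ X, (∀ r ∈ S, x r = s r) ∧ ∀ q ∈ V, x q = v q) →
        ∃ x ∈ X, x p = u ∧ (∀ r ∈ S, x r = s r) ∧ ∀ q ∈ V, x q = v q) V hV ?_ ?_
  · intro p S hS hpS hpV hSV hdist u s v h1 _h2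
    obtain ⟨x, hx, hxp, hxS⟩ := h1
    exact ⟨x, hx, hxp, hxS, by simp⟩
  · intro a V ha hVfin IH
    intro p S hS hpS hpV hSV hdist u s v h1 h2
    have hpa : p ≠ a := fun e => hpV (e ▸ Set.mem_insert a V)
    have hpV' : p ∉ V := fun e => hpV (Set.mem_insert_of_mem a e)
    have haS : a ∉ S := fun e => hSV.ne_of_mem e (Set.mem_insert a V) rfl
    have haV : a ∉ V := ha
    obtain ⟨z, hz, hzS, hzV⟩ := h2
    obtain ⟨y, hy, hyp, hyS, hya⟩ :=
      h p a (hdist a (Set.mem_insert a V)) S hS hpS haS hpa u (v a) s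
        h1 ⟨z, hz, hzS, hzV a (Set.mem_insert a V)⟩
    set s' : Site d → A := Function.update s a (v a) with hs'
    have hs'a : s' a = v a := Function.update_self a (v a) s
    have hs'r : ∀ r ∈ S, s' r = s r := fun r hr =>
      Function.update_of_ne (by rintro rfl; exact haS hr) (v a) s
    have hIH := IH p (insert a S) (hS.insert a)
      (by
        intro hmem
        rcases hmem with e | hmem
        · exact hpa e
        · exact hpS hmem)
      hpV'
      (by
        rw [Set.disjoint_left]
        rintro r (rfl | hr) hrV
        · exact haV hrV
        · exact hSV.ne_of_mem hr (Set.mem_insert_of_mem a hrV) rfl)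
      (fun q hq => hdist q (Set.mem_insert_of_mem a hq)) u s' v
      ⟨y, hy, hyp, by
        rintro r (rfl | hr)
        · rw [hs'a]; exact hya
        · rw [hs'r r hr]; exact hyS r hr⟩
      ⟨z, hz, by
        rintro r (rfl | hr)
        · rw [hs'a]; exact hzV r (Set.mem_insert r V)
        · rw [hs'r r hr]; exact hzS r hr,
        fun q hq => hzV q (Set.mem_insert_of_mem a hq)⟩
    obtain ⟨x, hx, hxp, hxS', hxV⟩ := hIH
    refine ⟨x, hx, hxp, ?_, ?_⟩
    · intro r hr
      rw [← hs'r r hr]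
      exact hxS' r (Set.mem_insert_of_mem a hr)
    · rintro q (rfl | hq)
      · rw [← hs'a]; exact hxS' q (Set.mem_insert q S)
      · exact hxV q hq

lemma tssm_aux_full {d : ℕ} {A : Type*} (X : Set (Site d → A)) (g : ℕ)
    (h : ∀ p q : Site d, g ≤ dist1 p q →
      ∀ S : Set (Site d), S.Finite → p ∉ S → q ∉ S → p ≠ q →
      ∀ (u v : A) (s : Site d → A),
        (∃ x ∈ X, x p = u ∧ ∀ r ∈ S, x r = s r) →
        (∃ x ∈ X, (∀ r ∈ S, x r = s r) ∧ x q = v) →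
        ∃ x ∈ X, x p = u ∧ (∀ r ∈ S, x r = s r) ∧ x q = v) :
    ∀ U : Set (Site d), U.Finite →
      ∀ S V : Set (Site d), S.Finite → V.Finite →
      Disjoint U S → Disjoint S V → Disjoint U V →
      (∀ p ∈ U, ∀ q ∈ V, g ≤ dist1 p q) →
      ∀ u s v : Site d → A,
        (∃ x ∈ X, (∀ p ∈ U, x p = u p) ∧ (∀ p ∈ S, x p = s p)) →
        (∃ x ∈ X, (∀ p ∈ S, x p = s p) ∧ (∀ p ∈ V, x p = v p)) →
        ∃ x ∈ X, (∀ p ∈ U, x p = u p) ∧ (∀ p ∈ S, x p = s p) ∧ ∀ p ∈ V, x p = v p := by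
  classical
  have aux := tssm_aux_single X g h
  intro U hU
  refine Set.Finite.induction_on
    (motive := fun U _ => ∀ S V : Set (Site d), S.Finite → V.Finite →
      Disjoint U S → Disjoint S V → Disjoint U V →
      (∀ p ∈ U, ∀ q ∈ V, g ≤ dist1 p q) →
      ∀ u s v : Site d → A,
        (∃ x ∈ X, (∀ p ∈ U, x p = u p) ∧ (∀ p ∈ S, x p = s p)) →
        (∃ x ∈ X, (∀ p ∈ S, x p = s p) ∧ (∀ p ∈ V, x p = v p)) →
        ∃ x ∈ X, (∀ p ∈ U, x p = u p) ∧ (∀ p ∈ S, x p = s p) ∧ ∀ p ∈ V, x p = v p)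
    U hU ?_ ?_
  · intro S V _ _ _ _ _ _ u s v _ h2
    obtain ⟨x, hx, hxS, hxV⟩ := h2
    exact ⟨x, hx, by simp, hxS, hxV⟩
  · intro p U hpU hUfin IH
    intro S V hS hV hUS hSV hUV hdist u s v h1 h2
    have hpS : p ∉ S := fun e => hUS.ne_of_mem (Set.mem_insert p U) e rfl
    have hpV : p ∉ V := fun e => hUV.ne_of_mem (Set.mem_insert p U) e rfl
    obtain ⟨x1, hx1, hx1U, hx1S⟩ := h1
    obtain ⟨y, hy, hyp, hyS, hyV⟩ := aux V hV p S hS hpS hpV hSV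
      (fun q hq => hdist p (Set.mem_insert p U) q hq) (u p) s v
      ⟨x1, hx1, hx1U p (Set.mem_insert p U), hx1S⟩ h2
    set s' : Site d → A := Function.update s p (u p) with hs'
    have hs'p : s' p = u p := Function.update_self p (u p) s
    have hs'r : ∀ r ∈ S, s' r = s r := fun r hr =>
      Function.update_of_ne (by rintro rfl; exact hpS hr) (u p) s
    have hIH := IH (insert p S) V (hS.insert p) hV
      (by
        rw [Set.disjoint_left]
        rintro r hrU (rfl | hrS)
        · exact hpU hrU
        · exact hUS.ne_of_mem (Set.mem_insert_of_mem p hrU) hrS rfl)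
      (by
        rw [Set.disjoint_left]
        rintro r (rfl | hr) hrV
        · exact hpV hrV
        · exact hSV.ne_of_mem hr hrV rfl)
      (hUV.mono_left (Set.subset_insert p U))
      (fun p' hp' q hq => hdist p' (Set.mem_insert_of_mem p hp') q hq) u s' v
      ⟨x1, hx1, fun r hr => hx1U r (Set.mem_insert_of_mem p hr), by
        rintro r (rfl | hr)
        · rw [hs'p]; exact hx1U r (Set.mem_insert r U)
        · rw [hs'r r hr]; exact hx1S r hr⟩
      ⟨y, hy, by
        rintro r (rfl | hr)
        · rw [hs'p]; exact hyp
        · rw [hs'r r hr]; exact hyS r hr,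
        hyV⟩
    obtain ⟨x, hx, hxU, hxS', hxV⟩ := hIH
    refine ⟨x, hx, ?_, ?_, hxV⟩
    · rintro r (rfl | hr)
      · rw [← hs'p]; exact hxS' r (Set.mem_insert r S)
      · exact hxU r hr
    · intro r hr
      rw [← hs'r r hr]
      exact hxS' r (Set.mem_insert_of_mem p hr)

theorem tssm_of_singletons {d : ℕ} {A : Type*} [Fintype A]
    [TopologicalSpace A] [DiscreteTopology A]
    (X : Set (Site d → A)) (hX : IsShiftSpace X) (g : ℕ)
    (h : ∀ p q : Site d, g ≤ dist1 p q →
      ∀ S : Set (Site d), S.Finite → p ∉ S → q ∉ S → p ≠ q →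
      ∀ (u v : A) (s : Site d → A),
        (∃ x ∈ X, x p = u ∧ ∀ r ∈ S, x r = s r) →
        (∃ x ∈ X, (∀ r ∈ S, x r = s r) ∧ x q = v) →
        ∃ x ∈ X, x p = u ∧ (∀ r ∈ S, x r = s r) ∧ x q = v) :
    TSSM X g :=
  fun U S V hU hS hV hUS hSV hUV hdist u s v h1 h2 =>
    tssm_aux_full X g h U hU S V hS hV hUS hSV hUV hdist u s v h1 h2
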